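/- Let $u, v \in \mathbb{R}^7$ be orthonormal, let $w$ be a unit vector orthogonal to $u$, $v$, and $u \times v$, and set $\tilde{S} = \sigma(u, v, u \times v, w)$. Then $\star\varphi_0(\tilde{S}, u \times \tilde{S}, v \times \tilde{S}, (u \times v) \times \tilde{S}) = \pm 1$; in particular the 4-plane spanned by these four vectors is coassociative (calibrated by $\pm\star\varphi_0$). -/

import Mathlib

noncomputable section
open scoped RealInnerProductSpace

abbrev R7 : Type := EuclideanSpace ℝ (Fin 7)

/-- standard basis vector -/
def e (k : Fin 7) : R7 := EuclideanSpace.single k 1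

/-- `e^{ijk}(u,v,w)` -/
def tri (i j k : Fin 7) (u v w : R7) : ℝ :=
  Matrix.det !![u i, u j, u k; v i, v j, v k; w i, w j, w k]

/-- the standard `G₂` 3-form `φ₀` (indices shifted to 0-based) -/
def phi0 (u v w : R7) : ℝ :=
  tri 0 1 2 u v w + tri 0 3 4 u v w + tri 0 5 6 u v w + tri 1 3 5 u v w
    - tri 1 4 6 u v w - tri 2 3 6 u v w - tri 2 4 5 u v w

/-- `e^{ijkl}(u,v,w,z)` -/
def quad (i j k l : Fin 7) (u v w z : R7) : ℝ :=
  Matrix.det !![u i, u j, u k, u l; v i, v j, v k, v l;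
    w i, w j, w k, w l; z i, z j, z k, z l]

/-- the 4-form `⋆φ₀` -/
def starphi0 (u v w z : R7) : ℝ :=
  quad 3 4 5 6 u v w z + quad 1 2 5 6 u v w z + quad 1 2 3 4 u v w z
    + quad 0 2 4 6 u v w z - quad 0 2 3 5 u v w z - quad 0 1 4 5 u v w z
    - quad 0 1 3 6 u v w z

/-- the cross product: `⟪u × v, w⟫ = φ₀(u,v,w)` -/
def cross (u v : R7) : R7 :=
  (WithLp.equiv 2 (Fin 7 → ℝ)).symm fun k => phi0 u v (e k)

/-- the associator `χ`: `⟪χ(u,v,w), z⟫ = ⋆φ₀(u,v,w,z)` -/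
def chi (u v w : R7) : R7 :=
  (WithLp.equiv 2 (Fin 7 → ℝ)).symm fun k => starphi0 u v w (e k)

/-- the coassociator `σ` -/
def sigma (a b c d : R7) : R7 :=
  ⟪b, cross c d⟫ • a + ⟪c, cross a d⟫ • b + ⟪a, cross b d⟫ • c + ⟪b, cross a c⟫ • d

/-- Gram determinant `|u ∧ v ∧ w|²` -/
def gram3 (u v w : R7) : ℝ :=
  Matrix.det !![⟪u,u⟫, ⟪u,v⟫, ⟪u,w⟫; ⟪v,u⟫, ⟪v,v⟫, ⟪v,w⟫; ⟪w,u⟫, ⟪w,v⟫, ⟪w,w⟫]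

/-- Gram determinant `|u ∧ v ∧ w ∧ z|²` -/
def gram4 (u v w z : R7) : ℝ :=
  Matrix.det !![⟪u,u⟫, ⟪u,v⟫, ⟪u,w⟫, ⟪u,z⟫;
    ⟪v,u⟫, ⟪v,v⟫, ⟪v,w⟫, ⟪v,z⟫;
    ⟪w,u⟫, ⟪w,v⟫, ⟪w,w⟫, ⟪w,z⟫;
    ⟪z,u⟫, ⟪z,v⟫, ⟪z,w⟫, ⟪z,z⟫]



set_option maxHeartbeats 4000000

theorem det_fin_four' (A : Matrix (Fin 4) (Fin 4) ℝ) : A.det = A 0 0*A 1 1*A 2 2*A 3 3 - A 0 0*A 1 1*A 2 3*A 3 2 - A 0 0*A 1 2*A 2 1*A 3 3 + A 0 0*A 1 2*A 2 3*A 3 1 + A 0 0*A 1 3*A 2 1*A 3 2 - A 0 0*A 1 3*A 2 2*A 3 1 - A 0 1*A 1 0*A 2 2*A 3 3 + A 0 1*A 1 0*A 2 3*A 3 2 + A 0 1*A 1 2*A 2 0*A 3 3 - A 0 1*A 1 2*A 2 3*A 3 0 - A 0 1*A 1 3*A 2 0*A 3 2 + A 0 1*A 1 3*A 2 2*A 3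 0 + A 0 2*A 1 0*A 2 1*A 3 3 - A 0 2*A 1 0*A 2 3*A 3 1 - A 0 2*A 1 1*A 2 0*A 3 3 + A 0 2*A 1 1*A 2 3*A 3 0 + A 0 2*A 1 3*A 2 0*A 3 1 - A 0 2*A 1 3*A 2 1*A 3 0 - A 0 3*A 1 0*A 2 1*A 3 2 + A 0 3*A 1 0*A 2 2*A 3 1 + A 0 3*A 1 1*A 2 0*A 3 2 - A 0 3*A 1 1*A 2 2*A 3 0 - A 0 3*A 1 2*A 2 0*A 3 1 + A 0 3*A 1 2*A 2 1*A 3 0 := by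
  rw [Matrix.det_succ_row_zero]
  simp [Fin.sum_univ_succ, Matrix.det_fin_three, Fin.succAbove,
    show (2:Fin 4).succ = 3 from rfl, show (1:Fin 4).succ = 2 from rfl,
    show (0:Fin 4).succ = 1 from rfl, show ((2:Fin 3).succ:Fin 4) = 3 from rfl,
    show ((2:Fin 3).castSucc:Fin 4) = 2 from rfl, show ((1:Fin 3).castSucc:Fin 4) = 1 from rfl,
    show ((0:Fin 3).castSucc:Fin 4) = 0 from rfl]
  try ring

lemma phi0_ex (a b c : R7) : phi0 a b c = a 0*b 1*c 2 - a 0*b 2*c 1 - a 1*b 0*c 2 + a 1*b 2*c 0 + a 2*b 0*c 1 - a 2*b 1*c 0 + a 0*b 3*c 4 - a 0*b 4*c 3 - a 3*b 0*c 4 + a 3*b 4*c 0 + a 4*b 0*c 3 - a 4*b 3*c 0 + a 0*b 5*c 6 - a 0*b 6*c 5 - a 5*b 0*c 6 + a 5*b 6*c 0 + a 6*b 0*c 5 - a 6*b 5*c 0 + a 1*b 3*c 5 - a 1*b 5*c 3 - a 3*b 1*c 5 + a 3*b 5*c 1 + a 5*b 1*c 3 - a 5*b 3*c 1 - a 1*b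 4*c 6 + a 1*b 6*c 4 + a 4*b 1*c 6 - a 4*b 6*c 1 - a 6*b 1*c 4 + a 6*b 4*c 1 - a 2*b 3*c 6 + a 2*b 6*c 3 + a 3*b 2*c 6 - a 3*b 6*c 2 - a 6*b 2*c 3 + a 6*b 3*c 2 - a 2*b 4*c 5 + a 2*b 5*c 4 + a 4*b 2*c 5 - a 4*b 5*c 2 - a 5*b 2*c 4 + a 5*b 4*c 2 := by
  simp [phi0, tri, Matrix.det_fin_three]
  try ring

lemma starphi0_ex (a b c d : R7) : starphi0 a b c d = a 3*b 4*c 5*d 6 - a 3*b 4*c 6*d 5 - a 3*b 5*c 4*d 6 + a 3*b 5*c 6*d 4 + a 3*b 6*c 4*d 5 - a 3*b 6*c 5*d 4 - a 4*b 3*c 5*d 6 + a 4*b 3*c 6*d 5 + a 4*b 5*c 3*d 6 - a 4*b 5*c 6*d 3 - a 4*b 6*c 3*d 5 + a 4*b 6*c 5*d 3 + a 5*b 3*c 4*d 6 - a 5*b 3*c 6*d 4 - a 5*b 4*c 3*d 6 + a 5*b 4*c 6*d 3 + a 5*b 6*c 3*d 4 - a 5*b 6*c 4*d 3 - a 6*b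 3*c 4*d 5 + a 6*b 3*c 5*d 4 + a 6*b 4*c 3*d 5 - a 6*b 4*c 5*d 3 - a 6*b 5*c 3*d 4 + a 6*b 5*c 4*d 3 + a 1*b 2*c 5*d 6 - a 1*b 2*c 6*d 5 - a 1*b 5*c 2*d 6 + a 1*b 5*c 6*d 2 + a 1*b 6*c 2*d 5 - a 1*b 6*c 5*d 2 - a 2*b 1*c 5*d 6 + a 2*b 1*c 6*d 5 + a 2*b 5*c 1*d 6 - a 2*b 5*c 6*d 1 - a 2*b 6*c 1*d 5 + a 2*b 6*c 5*d 1 + a 5*b 1*c 2*d 6 - a 5*b 1*c 6*d 2 - a 5*b 2*c 1*d 6 + a 5*b 2*c 6*d 1 + a 5*b 6*c 1*d 2 - a 5*b 6*c 2*d 1 - a 6*b 1*c 2*d 5 + a 6*b 1*c 5*d 2 + a 6*b 2*c 1*d 5 - a 6*b 2*c 5*d 1 - a 6*b 5*c 1*d 2 + a 6*b 5*c 2*d 1 + a 1*b 2*c 3*d 4 - a 1*b 2*c 4*d 3 - a 1*b 3*c 2*d 4 + a 1*b 3*c 4*d 2 + a 1*b 4*c 2*d 3 - a 1*b 4*c 3*d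 2 - a 2*b 1*c 3*d 4 + a 2*b 1*c 4*d 3 + a 2*b 3*c 1*d 4 - a 2*b 3*c 4*d 1 - a 2*b 4*c 1*d 3 + a 2*b 4*c 3*d 1 + a 3*b 1*c 2*d 4 - a 3*b 1*c 4*d 2 - a 3*b 2*c 1*d 4 + a 3*b 2*c 4*d 1 + a 3*b 4*c 1*d 2 - a 3*b 4*c 2*d 1 - a 4*b 1*c 2*d 3 + a 4*b 1*c 3*d 2 + a 4*b 2*c 1*d 3 - a 4*b 2*c 3*d 1 - a 4*b 3*c 1*d 2 + a 4*b 3*c 2*d 1 + a 0*b 2*c 4*d 6 - a 0*b 2*c 6*d 4 - a 0*b 4*c 2*d 6 + a 0*b 4*c 6*d 2 + a 0*b 6*c 2*d 4 - a 0*b 6*c 4*d 2 - a 2*b 0*c 4*d 6 + a 2*b 0*c 6*d 4 + a 2*b 4*c 0*d 6 - a 2*b 4*c 6*d 0 - a 2*b 6*c 0*d 4 + a 2*b 6*c 4*d 0 + a 4*b 0*c 2*d 6 - a 4*b 0*c 6*d 2 - a 4*b 2*c 0*d 6 + a 4*b 2*c 6*d 0 + a 4*b 6*c 0*d 2 - a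 4*b 6*c 2*d 0 - a 6*b 0*c 2*d 4 + a 6*b 0*c 4*d 2 + a 6*b 2*c 0*d 4 - a 6*b 2*c 4*d 0 - a 6*b 4*c 0*d 2 + a 6*b 4*c 2*d 0 - a 0*b 2*c 3*d 5 + a 0*b 2*c 5*d 3 + a 0*b 3*c 2*d 5 - a 0*b 3*c 5*d 2 - a 0*b 5*c 2*d 3 + a 0*b 5*c 3*d 2 + a 2*b 0*c 3*d 5 - a 2*b 0*c 5*d 3 - a 2*b 3*c 0*d 5 + a 2*b 3*c 5*d 0 + a 2*b 5*c 0*d 3 - a 2*b 5*c 3*d 0 - a 3*b 0*c 2*d 5 + a 3*b 0*c 5*d 2 + a 3*b 2*c 0*d 5 - a 3*b 2*c 5*d 0 - a 3*b 5*c 0*d 2 + a 3*b 5*c 2*d 0 + a 5*b 0*c 2*d 3 - a 5*b 0*c 3*d 2 - a 5*b 2*c 0*d 3 + a 5*b 2*c 3*d 0 + a 5*b 3*c 0*d 2 - a 5*b 3*c 2*d 0 - a 0*b 1*c 4*d 5 + a 0*b 1*c 5*d 4 + a 0*b 4*c 1*d 5 - a 0*b 4*c 5*d 1 - a 0*b 5*c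 1*d 4 + a 0*b 5*c 4*d 1 + a 1*b 0*c 4*d 5 - a 1*b 0*c 5*d 4 - a 1*b 4*c 0*d 5 + a 1*b 4*c 5*d 0 + a 1*b 5*c 0*d 4 - a 1*b 5*c 4*d 0 - a 4*b 0*c 1*d 5 + a 4*b 0*c 5*d 1 + a 4*b 1*c 0*d 5 - a 4*b 1*c 5*d 0 - a 4*b 5*c 0*d 1 + a 4*b 5*c 1*d 0 + a 5*b 0*c 1*d 4 - a 5*b 0*c 4*d 1 - a 5*b 1*c 0*d 4 + a 5*b 1*c 4*d 0 + a 5*b 4*c 0*d 1 - a 5*b 4*c 1*d 0 - a 0*b 1*c 3*d 6 + a 0*b 1*c 6*d 3 + a 0*b 3*c 1*d 6 - a 0*b 3*c 6*d 1 - a 0*b 6*c 1*d 3 + a 0*b 6*c 3*d 1 + a 1*b 0*c 3*d 6 - a 1*b 0*c 6*d 3 - a 1*b 3*c 0*d 6 + a 1*b 3*c 6*d 0 + a 1*b 6*c 0*d 3 - a 1*b 6*c 3*d 0 - a 3*b 0*c 1*d 6 + a 3*b 0*c 6*d 1 + a 3*b 1*c 0*d 6 - a 3*b 1*c 6*d 0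 - a 3*b 6*c 0*d 1 + a 3*b 6*c 1*d 0 + a 6*b 0*c 1*d 3 - a 6*b 0*c 3*d 1 - a 6*b 1*c 0*d 3 + a 6*b 1*c 3*d 0 + a 6*b 3*c 0*d 1 - a 6*b 3*c 1*d 0 := by
  simp [starphi0, quad, det_fin_four']
  try ring

lemma crossApply7 (a b : R7) (k : Fin 7) : cross a b k = phi0 a b (e k) := rfl

lemma e_apply (k j : Fin 7) : e k j = if j = k then 1 else 0 := EuclideanSpace.single_apply k 1 j

lemma inner_ex (a b : R7) : ⟪a,b⟫ = a 0*b 0 + a 1*b 1 + a 2*b 2 + a 3*b 3 + a 4*b 4 + a 5*b 5 + a 6*b 6 := by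
  simp [PiLp.inner_apply, RCLike.inner_apply, Fin.sum_univ_seven]
  try ring

lemma phi0_e0 (a b : R7) : phi0 a b (e 0) = a 1*b 2 - a 2*b 1 + a 3*b 4 - a 4*b 3 + a 5*b 6 - a 6*b 5 := by
  rw [phi0_ex]
  simp [e_apply]
  try ring

lemma phi0_e1 (a b : R7) : phi0 a b (e 1) = - a 0*b 2 + a 2*b 0 + a 3*b 5 - a 5*b 3 - a 4*b 6 + a 6*b 4 := by
  rw [phi0_ex]
  simp [e_apply]
  try ring

lemma phi0_e2 (a b : R7) : phi0 a b (e 2) = a 0*b 1 - a 1*b 0 - a 3*b 6 + a 6*b 3 - a 4*b 5 + a 5*b 4 := by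
  rw [phi0_ex]
  simp [e_apply]
  try ring

lemma phi0_e3 (a b : R7) : phi0 a b (e 3) = - a 0*b 4 + a 4*b 0 - a 1*b 5 + a 5*b 1 + a 2*b 6 - a 6*b 2 := by
  rw [phi0_ex]
  simp [e_apply]
  try ring

lemma phi0_e4 (a b : R7) : phi0 a b (e 4) = a 0*b 3 - a 3*b 0 + a 1*b 6 - a 6*b 1 + a 2*b 5 - a 5*b 2 := by
  rw [phi0_ex]
  simp [e_apply]
  try ring

lemma phi0_e5 (a b : R7) : phi0 a b (e 5) = - a 0*b 6 + a 6*b 0 + a 1*b 3 - a 3*b 1 - a 2*b 4 + a 4*b 2 := by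
  rw [phi0_ex]
  simp [e_apply]
  try ring

lemma phi0_e6 (a b : R7) : phi0 a b (e 6) = a 0*b 5 - a 5*b 0 - a 1*b 4 + a 4*b 1 - a 2*b 3 + a 3*b 2 := by
  rw [phi0_ex]
  simp [e_apply]
  try ring

lemma inner_cross (a b c : R7) : ⟪cross a b, c⟫ = phi0 a b c := by
  rw [inner_ex, phi0_ex]
  simp only [crossApply7, phi0_e0, phi0_e1, phi0_e2, phi0_e3, phi0_e4, phi0_e5, phi0_e6]
  ring

lemma phi0_swap23 (a b c : R7) : phi0 a b c = -phi0 a c b := by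
  rw [phi0_ex, phi0_ex]; ring

lemma phi0_cyc (a b c : R7) : phi0 a b c = phi0 c a b := by
  rw [phi0_ex, phi0_ex]; ring

lemma phi0_zero13 (a b : R7) : phi0 a b a = 0 := by rw [phi0_ex]; ring

lemma phi0_zero23 (a b : R7) : phi0 a b b = 0 := by rw [phi0_ex]; ring

lemma R7_ext {x y : R7} (h0 : x 0 = y 0) (h1 : x 1 = y 1) (h2 : x 2 = y 2) (h3 : x 3 = y 3)
    (h4 : x 4 = y 4) (h5 : x 5 = y 5) (h6 : x 6 = y 6) : x = y := by
  ext k; fin_cases k <;> assumption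

lemma cross_skew (a b : R7) : cross a b = -cross b a := by
  refine R7_ext ?_ ?_ ?_ ?_ ?_ ?_ ?_ <;>
  · simp only [PiLp.neg_apply, crossApply7, phi0_e0, phi0_e1, phi0_e2, phi0_e3, phi0_e4, phi0_e5, phi0_e6]
    ring

lemma cross_negr (a b : R7) : cross a (-b) = -cross a b := by
  refine R7_ext ?_ ?_ ?_ ?_ ?_ ?_ ?_ <;>
  · simp only [PiLp.neg_apply, crossApply7, phi0_e0, phi0_e1, phi0_e2, phi0_e3, phi0_e4, phi0_e5, phi0_e6]
    ring

lemma cross_cross_self (a b : R7) : cross a (cross a b) = ⟪a,b⟫ • a - ⟪a,a⟫ • b := by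
  refine R7_ext ?_ ?_ ?_ ?_ ?_ ?_ ?_ <;>
  · simp only [PiLp.sub_apply, PiLp.smul_apply, smul_eq_mul, inner_ex,
      crossApply7, phi0_e0, phi0_e1, phi0_e2, phi0_e3, phi0_e4, phi0_e5, phi0_e6]
    ring

lemma starphi0_neg4 (a b c d : R7) : starphi0 (-a) (-b) (-c) (-d) = starphi0 a b c d := by
  rw [starphi0_ex, starphi0_ex]; simp only [PiLp.neg_apply]; ring

lemma starphi0_cycle (a b c d : R7) : starphi0 a b c d = -starphi0 d a b c := by
  rw [starphi0_ex, starphi0_ex]; ring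

lemma key (x y z d : R7) :
    starphi0 x y z d = ⟪x,z⟫*⟪y,d⟫ - ⟪x,y⟫*⟪z,d⟫ - ⟪cross x (cross y z), d⟫ := by
  rw [starphi0_ex]
  simp only [inner_ex, crossApply7, phi0_e0, phi0_e1, phi0_e2, phi0_e3, phi0_e4, phi0_e5, phi0_e6]
  ring

theorem stmt18 (u v w : R7) (hu : ‖u‖ = 1) (hv : ‖v‖ = 1) (hw : ‖w‖ = 1)
    (huv : ⟪u, v⟫ = 0) (hwu : ⟪w, u⟫ = 0) (hwv : ⟪w, v⟫ = 0)
    (hwc : ⟪w, cross u v⟫ = 0) :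
    starphi0 (sigma u v (cross u v) w) (cross u (sigma u v (cross u v) w))
        (cross v (sigma u v (cross u v) w))
        (cross (cross u v) (sigma u v (cross u v) w)) = 1 ∨
      starphi0 (sigma u v (cross u v) w) (cross u (sigma u v (cross u v) w))
        (cross v (sigma u v (cross u v) w))
        (cross (cross u v) (sigma u v (cross u v) w)) = -1 := by
  have iu : ⟪u,u⟫ = (1:ℝ) := by rw [real_inner_self_eq_norm_mul_norm, hu]; norm_num
  have iv : ⟪v,v⟫ = (1:ℝ) := by rw [real_inner_self_eq_norm_mul_norm, hv]; norm_num
  have iw : ⟪w,w⟫ = (1:ℝ) := by rw [real_inner_self_eq_norm_mul_norm, hw]; norm_num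
  have hvu : ⟪v,u⟫ = 0 := by rw [real_inner_comm]; exact huv
  have huw : ⟪u,w⟫ = 0 := by rw [real_inner_comm]; exact hwu
  have hvw : ⟪v,w⟫ = 0 := by rw [real_inner_comm]; exact hwv
  have hcw : ⟪cross u v, w⟫ = 0 := by rw [real_inner_comm]; exact hwc
  have k1 : cross u (cross u v) = -v := by
    rw [cross_cross_self, huv, iu]; simp
  have k2 : cross v (cross u v) = u := by
    rw [cross_skew u v, cross_negr, cross_cross_self, hvu, iv]; simp
  have k3 : cross (cross u v) u = v := by rw [cross_skew (cross u v) u, k1]; simp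
  have k4 : cross (cross u v) v = -u := by rw [cross_skew (cross u v) v, k2]
  have k6 : cross (cross v w) v = w := by
    rw [cross_skew (cross v w) v, cross_cross_self, hvw, iv]; simp
  have hcu : ⟪cross u v, u⟫ = 0 := by rw [inner_cross, phi0_zero13]
  have s1 : ⟪v, cross (cross u v) w⟫ = 0 := by
    rw [real_inner_comm, inner_cross (cross u v) w v, phi0_swap23,
      ← inner_cross (cross u v) v w, k4]
    simp [huw]
  have s2 : ⟪cross u v, cross u w⟫ = 0 := by
    rw [real_inner_comm, inner_cross u w (cross u v), phi0_swap23,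
      ← inner_cross u (cross u v) w, k1]
    simp [hvw]
  have s3 : ⟪u, cross v w⟫ = 0 := by
    rw [real_inner_comm, inner_cross v w u, phi0_cyc, ← inner_cross u v w]
    exact hcw
  have s4 : ⟪v, cross u (cross u v)⟫ = -1 := by
    rw [k1]; simp [iv, hv]
  have hsig : sigma u v (cross u v) w = -w := by
    simp only [sigma, s1, s2, s3, s4]
    simp
  rw [hsig, cross_negr, cross_negr, cross_negr, starphi0_neg4]
  right
  have t1 : ⟪w, cross v w⟫ = 0 := by rw [real_inner_comm, inner_cross, phi0_zero23]
  have t2 : ⟪w, cross u w⟫ = 0 := by rw [real_inner_comm, inner_cross, phi0_zero23]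
  have k4w : cross w (cross (cross u v) w) = cross u v := by
    rw [cross_skew (cross u v) w, cross_negr, cross_cross_self, hwc, iw]
    simp
  have t3 : ⟪cross w (cross (cross u w) (cross v w)), cross (cross u v) w⟫
      = -⟪cross u v, cross (cross u w) (cross v w)⟫ := by
    rw [inner_cross w (cross (cross u w) (cross v w)) (cross (cross u v) w), phi0_swap23,
      ← inner_cross w (cross (cross u v) w) (cross (cross u w) (cross v w)), k4w]
  have A1 : starphi0 (cross v w) (cross u v) u w = -1 := by
    rw [key, k3, k6, hcw, huw, iw]
    ring
  have A2 : starphi0 (cross u v) u w (cross v w) = 1 := by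
    rw [starphi0_cycle, A1]; norm_num
  have A3 : ⟪cross (cross u v) (cross u w), cross v w⟫ = -1 := by
    have h := key (cross u v) u w (cross v w)
    rw [A2, hcw, hcu] at h
    ring_nf at h ⊢
    linarith
  have A4 : ⟪cross u v, cross (cross u w) (cross v w)⟫ = -1 := by
    rw [real_inner_comm, inner_cross (cross u w) (cross v w) (cross u v), phi0_cyc,
      ← inner_cross (cross u v) (cross u w) (cross v w)]
    exact A3
  rw [key, t1, t2, t3, A4]
  ring
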